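/- Let f : ℝⁿ → ℝ be convex and differentiable with L-Lipschitz gradient, and let w' = w - η∇f(w) with 0 < η ≤ 1/L. Then the gradient norm does not increase: ‖∇f(w')‖ ≤ ‖∇f(w)‖. Consequently, for the gradient descent sequence w_{t+1} = wₜ - η∇f(wₜ), the step lengths ‖w_{t+1} - wₜ‖ = η‖∇f(wₜ)‖ are non-increasing in t. -/

import Mathlib

open InnerProductSpace Set
open scoped RealInnerProductSpace

section Aux

variable {n : ℕ}

local notation "E" => EuclideanSpace ℝ (Fin n)

/-- derivative of the restriction of `f` to a line -/
lemma line_hasDerivAt (f : E → ℝ) (hf : Differentiable ℝ f) (x y : E) (t : ℝ) :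
    HasDerivAt (fun s : ℝ => f (x + s • (y - x)))
      ⟪gradient f (x + t • (y - x)), y - x⟫ t := by
  have hc : HasDerivAt (fun s : ℝ => x + s • (y - x)) (y - x) t := by
    simpa using ((hasDerivAt_id t).smul_const (y - x)).const_add x
  have hg := (hf (x + t • (y - x))).hasGradientAt
  have hF : HasFDerivAt f (toDual ℝ E (gradient f (x + t • (y - x)))) (x + t • (y - x)) := hg
  have := hF.comp_hasDerivAt t hc
  simpa [Function.comp_def, InnerProductSpace.toDual_apply_apply] using this

/-- First-order condition: `f x + ⟪∇f x, y - x⟫ ≤ f y`. -/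
lemma grad_lower_bound (f : E → ℝ) (hconv : ConvexOn ℝ Set.univ f)
    (hf : Differentiable ℝ f) (x y : E) :
    f x + ⟪gradient f x, y - x⟫ ≤ f y := by
  set g := fun s : ℝ => f (x + s • (y - x)) with hg
  have hgc : ConvexOn ℝ Set.univ g := by
    have := hconv.comp_affineMap (AffineMap.lineMap x y : ℝ →ᵃ[ℝ] E)
    have heq : (f ∘ (AffineMap.lineMap x y : ℝ →ᵃ[ℝ] E)) = g := by
      funext s
      simp [hg, AffineMap.lineMap_apply, Function.comp]
      congr 1
      module
    rw [heq, Set.preimage_univ] at this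
    exact this
  have hd0 : HasDerivAt g ⟪gradient f (x + (0:ℝ) • (y - x)), y - x⟫ 0 :=
    line_hasDerivAt f hf x y 0
  have := hgc.le_slope_of_hasDerivAt (Set.mem_univ (0:ℝ)) (Set.mem_univ (1:ℝ))
    zero_lt_one hd0
  rw [slope_def_field] at this
  have h0 : g 0 = f x := by simp [hg]
  have h1 : g 1 = f y := by simp [hg]
  simp only [h0, h1] at this
  have hx0 : x + (0:ℝ) • (y - x) = x := by simp
  rw [hx0] at hd0
  simp only [hx0] at this
  have : ⟪gradient f x, y - x⟫ ≤ (f y - f x) / (1 - 0) := by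
    simpa [div_eq_mul_inv] using this
  linarith [this, (by norm_num : ((1:ℝ) - 0) = 1) ▸ this]

/-- Descent lemma. -/
lemma descent_lemma (f : E → ℝ) (hf : Differentiable ℝ f)
    (L : ℝ) (hL : 0 < L) (hlip : LipschitzWith (Real.toNNReal L) (gradient f))
    (x y : E) :
    f y ≤ f x + ⟪gradient f x, y - x⟫ + L / 2 * ‖y - x‖ ^ 2 := by
  set g := fun s : ℝ => f (x + s • (y - x)) with hgdef
  set h := fun s : ℝ => g s - s * ⟪gradient f x, y - x⟫ - L / 2 * s ^ 2 * ‖y - x‖ ^ 2 with hhdef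
  have hderiv : ∀ t : ℝ, HasDerivAt h
      (⟪gradient f (x + t • (y - x)), y - x⟫ - ⟪gradient f x, y - x⟫
        - L * t * ‖y - x‖ ^ 2) t := by
    intro t
    have h1 := line_hasDerivAt f hf x y t
    have h2 : HasDerivAt (fun s : ℝ => s * ⟪gradient f x, y - x⟫)
        ⟪gradient f x, y - x⟫ t := by
      simpa using (hasDerivAt_id t).mul_const ⟪gradient f x, y - x⟫
    have h3 : HasDerivAt (fun s : ℝ => L / 2 * s ^ 2 * ‖y - x‖ ^ 2)
        (L * t * ‖y - x‖ ^ 2) t := by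
      have : HasDerivAt (fun s : ℝ => s ^ 2) (2 * t) t := by
        simpa using hasDerivAt_pow 2 t
      have := (this.const_mul (L / 2)).mul_const (‖y - x‖ ^ 2)
      exact this.congr_deriv (by ring)
    exact (h1.sub h2).sub h3
  have hmono : AntitoneOn h (Set.Icc (0:ℝ) 1) := by
    apply antitoneOn_of_deriv_nonpos (convex_Icc 0 1)
    · exact fun t _ => ((hderiv t).differentiableAt).continuousAt.continuousWithinAt
    · exact fun t _ => ((hderiv t).differentiableAt).differentiableWithinAt
    · intro t ht
      rw [interior_Icc] at ht
      rw [(hderiv t).deriv]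
      have hineq : ⟪gradient f (x + t • (y - x)) - gradient f x, y - x⟫
          ≤ L * t * ‖y - x‖ ^ 2 := by
        calc ⟪gradient f (x + t • (y - x)) - gradient f x, y - x⟫
            ≤ ‖gradient f (x + t • (y - x)) - gradient f x‖ * ‖y - x‖ :=
              real_inner_le_norm _ _
          _ ≤ (L * (t * ‖y - x‖)) * ‖y - x‖ := by
              apply mul_le_mul_of_nonneg_right _ (norm_nonneg _)
              have := hlip.dist_le_mul (x + t • (y - x)) x
              rw [Real.coe_toNNReal L hL.le] at this
              rw [dist_eq_norm, dist_eq_norm] at this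
              have heq1 : x + t • (y - x) - x = t • (y - x) := by abel
              rw [heq1] at this
              calc ‖gradient f (x + t • (y - x)) - gradient f x‖
                  ≤ L * ‖t • (y - x)‖ := this
                _ = L * (|t| * ‖y - x‖) := by rw [norm_smul]; simp
                _ = L * (t * ‖y - x‖) := by rw [abs_of_nonneg ht.1.le]
          _ = L * t * ‖y - x‖ ^ 2 := by ring
      rw [inner_sub_left] at hineq
      linarith
  have := hmono (Set.left_mem_Icc.mpr zero_le_one) (Set.right_mem_Icc.mpr zero_le_one)
    zero_le_one
  have h0 : h 0 = f x := by simp [hhdef, hgdef]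
  have h1 : h 1 = f y - ⟪gradient f x, y - x⟫ - L / 2 * ‖y - x‖ ^ 2 := by
    simp [hhdef, hgdef]
  rw [h0, h1] at this
  linarith

/-- The "three-point" inequality giving cocoercivity after symmetrization. -/
lemma star_ineq (f : E → ℝ) (hconv : ConvexOn ℝ Set.univ f) (hf : Differentiable ℝ f)
    (L : ℝ) (hL : 0 < L) (hlip : LipschitzWith (Real.toNNReal L) (gradient f))
    (x y : E) :
    f x + ⟪gradient f x, y - x⟫ + 1 / (2 * L) * ‖gradient f y - gradient f x‖ ^ 2 ≤ f y := by
  set u := gradient f y - gradient f x with hu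
  set z := y - (1 / L) • u with hz
  have hA := grad_lower_bound f hconv hf x z
  have hB := descent_lemma f hf L hL hlip y z
  have hzy : z - y = -((1 / L) • u) := by rw [hz]; abel
  have hzx : z - x = (y - x) - (1 / L) • u := by rw [hz]; abel
  have e1 : ⟪gradient f x, z - x⟫ = ⟪gradient f x, y - x⟫ - (1 / L) * ⟪gradient f x, u⟫ := by
    rw [hzx, inner_sub_right, real_inner_smul_right]
  have e2 : ⟪gradient f y, z - y⟫ = -((1 / L) * ⟪gradient f y, u⟫) := by
    rw [hzy, inner_neg_right, real_inner_smul_right]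
  have e3 : ‖z - y‖ ^ 2 = (1 / L) ^ 2 * ‖u‖ ^ 2 := by
    rw [hzy, norm_neg, norm_smul]
    rw [mul_pow]
    congr 1
    rw [Real.norm_eq_abs, sq_abs]
  have e4 : ⟪gradient f y, u⟫ - ⟪gradient f x, u⟫ = ‖u‖ ^ 2 := by
    rw [← inner_sub_left, ← hu, real_inner_self_eq_norm_sq]
  rw [e1] at hA
  rw [e2, e3] at hB
  have e5 : (1 / L) * ⟪gradient f y, u⟫ - (1 / L) * ⟪gradient f x, u⟫
      = (1 / L) * ‖u‖ ^ 2 := by rw [← mul_sub, e4]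
  have e6 : L / 2 * ((1 / L) ^ 2 * ‖u‖ ^ 2) = 1 / (2 * L) * ‖u‖ ^ 2 := by
    field_simp
  have e7 : (1 / L) * ‖u‖ ^ 2 - 1 / (2 * L) * ‖u‖ ^ 2 = 1 / (2 * L) * ‖u‖ ^ 2 := by
    field_simp; ring
  linarith

lemma cocoercive (f : E → ℝ) (hconv : ConvexOn ℝ Set.univ f) (hf : Differentiable ℝ f)
    (L : ℝ) (hL : 0 < L) (hlip : LipschitzWith (Real.toNNReal L) (gradient f))
    (x y : E) :
    (1 / L) * ‖gradient f y - gradient f x‖ ^ 2 ≤ ⟪gradient f y - gradient f x, y - x⟫ := by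
  have h1 := star_ineq f hconv hf L hL hlip x y
  have h2 := star_ineq f hconv hf L hL hlip y x
  rw [norm_sub_rev] at h2
  have e1 : ⟪gradient f y, x - y⟫ = -⟪gradient f y, y - x⟫ := by
    rw [← inner_neg_right]; congr 1; abel
  rw [e1] at h2
  have e2 : ⟪gradient f y - gradient f x, y - x⟫
      = ⟪gradient f y, y - x⟫ - ⟪gradient f x, y - x⟫ := inner_sub_left _ _ _
  rw [e2]
  have h2L : (0:ℝ) < 2 * L := by positivity
  have key : 1 / (2 * L) * ‖gradient f y - gradient f x‖ ^ 2
      + 1 / (2 * L) * ‖gradient f y - gradient f x‖ ^ 2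
      ≤ ⟪gradient f y, y - x⟫ - ⟪gradient f x, y - x⟫ := by linarith
  have e3 : 1 / (2 * L) * ‖gradient f y - gradient f x‖ ^ 2
      + 1 / (2 * L) * ‖gradient f y - gradient f x‖ ^ 2
      = (1 / L) * ‖gradient f y - gradient f x‖ ^ 2 := by
    field_simp; ring
  linarith

end Aux

theorem convex_grad_norm_nonincreasing {n : ℕ}
    (f : EuclideanSpace ℝ (Fin n) → ℝ)
    (hconv : ConvexOn ℝ Set.univ f) (hf : Differentiable ℝ f)
    (L : ℝ) (hL : 0 < L)
    (hlip : LipschitzWith (Real.toNNReal L) (gradient f))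
    (η : ℝ) (hη : 0 < η) (hηL : η ≤ 1 / L) :
    (∀ w : EuclideanSpace ℝ (Fin n),
      ‖gradient f (w - η • gradient f w)‖ ≤ ‖gradient f w‖) ∧
    ∀ w : ℕ → EuclideanSpace ℝ (Fin n),
      (∀ t, w (t + 1) = w t - η • gradient f (w t)) →
      Antitone (fun t => ‖w (t + 1) - w t‖) := by
  have main : ∀ w : EuclideanSpace ℝ (Fin n),
      ‖gradient f (w - η • gradient f w)‖ ≤ ‖gradient f w‖ := by
    intro w
    set g := gradient f w with hg
    set w' := w - η • g with hw'
    set g' := gradient f w' with hg'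
    have hcoco := cocoercive f hconv hf L hL hlip w w'
    have hd : w' - w = -(η • g) := by rw [hw']; abel
    rw [hd] at hcoco
    have e1 : ⟪g' - g, -(η • g)⟫ = -(η * ⟪g' - g, g⟫) := by
      rw [inner_neg_right, real_inner_smul_right]
    rw [e1] at hcoco
    have hstep : η * ‖g' - g‖ ^ 2 ≤ (1 / L) * ‖g' - g‖ ^ 2 :=
      mul_le_mul_of_nonneg_right hηL (sq_nonneg _)
    have hkey : ⟪g' - g, g⟫ ≤ -‖g' - g‖ ^ 2 := by
      have : η * ⟪g' - g, g⟫ ≤ -(η * ‖g' - g‖ ^ 2) := by linarith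
      nlinarith
    have hexp : ‖g'‖ ^ 2 = ‖g‖ ^ 2 + 2 * ⟪g, g' - g⟫ + ‖g' - g‖ ^ 2 := by
      have h := norm_add_sq_real g (g' - g)
      have he : g + (g' - g) = g' := by abel
      rw [he] at h
      linarith
    rw [real_inner_comm] at hexp
    have hsq : ‖g'‖ ^ 2 ≤ ‖g‖ ^ 2 := by nlinarith [sq_nonneg ‖g' - g‖]
    nlinarith [norm_nonneg g', norm_nonneg g]
  refine ⟨main, ?_⟩
  intro w hw
  apply antitone_nat_of_succ_le
  intro t
  have e1 : ∀ s, ‖w (s + 1) - w s‖ = η * ‖gradient f (w s)‖ := by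
    intro s
    rw [hw s]
    have : w s - η • gradient f (w s) - w s = -(η • gradient f (w s)) := by abel
    rw [this, norm_neg, norm_smul, Real.norm_eq_abs, abs_of_pos hη]
  simp only [e1]
  apply mul_le_mul_of_nonneg_left _ hη.le
  rw [hw t]
  exact main (w t)
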